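/- Lemma 2 (marginal density, multivariate, as an integral identity): let Ψ be an n×n real positive definite matrix and d, μ, y ∈ ℝⁿ. Set Σ = Ψ + d·dᵀ, η = dᵀΨ⁻¹(y−μ)/(1 + dᵀΨ⁻¹d) and ζ = (1 + dᵀΨ⁻¹d)^{-1/2}. Then ∫₀^∞ 2·φₙ(y; μ + t·d, Ψ)·φ(t; 0, 1) dt = 2·φₙ(y; μ, Σ)·Φ(η/ζ). -/

import Mathlib

open MeasureTheory Real Matrix

/-- The standard normal density `φ(w) = (2π)^{-1/2} exp(-w²/2)`. -/
noncomputable def stdNormalPDF (w : ℝ) : ℝ := (2 * π) ^ (-(1 : ℝ) / 2) * Real.exp (-w ^ 2 / 2)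

/-- The standard normal distribution function `Φ(x) = ∫_{-∞}^x φ(u) du`. -/
noncomputable def stdNormalCDF (x : ℝ) : ℝ := ∫ u in Set.Iic x, stdNormalPDF u

/-- The normal density with mean `m` and variance `s2 > 0`:
`φ(x; m, s²) = (2πs²)^{-1/2} exp(-(x−m)²/(2s²))`. -/
noncomputable def normalPDF (m s2 x : ℝ) : ℝ :=
  (2 * π * s2) ^ (-(1 : ℝ) / 2) * Real.exp (-(x - m) ^ 2 / (2 * s2))

/-- The `n`-dimensional normal density with mean `m` and positive definite covariance `V`:
`φₙ(y; m, V) = (2π)^{-n/2} (det V)^{-1/2} exp(-½ (y−m)ᵀ V⁻¹ (y−m))`. -/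
noncomputable def mvNormalPDF {n : ℕ} (m : Fin n → ℝ) (V : Matrix (Fin n) (Fin n) ℝ)
    (y : Fin n → ℝ) : ℝ :=
  (2 * π) ^ (-(n : ℝ) / 2) * V.det ^ (-(1 : ℝ) / 2) *
    Real.exp (-(1 / 2) * ((y - m) ⬝ᵥ (V⁻¹ *ᵥ (y - m))))

open Set in

-- aux: translation for Ioi integrals
lemma myIntegral_Ioi_add_right (f : ℝ → ℝ) (a r : ℝ) :
    ∫ x in Set.Ioi a, f (x + r) = ∫ x in Set.Ioi (a + r), f x := by
  have A : MeasurableEmbedding (fun x : ℝ => x + r) :=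
    (Homeomorph.addRight r).isClosedEmbedding.measurableEmbedding
  have h := A.setIntegral_map (μ := volume) f (Set.Ioi (a + r))
  rw [map_add_right_eq_self volume r] at h
  have hset : (fun x : ℝ => x + r) ⁻¹' Set.Ioi (a + r) = Set.Ioi a := by
    ext x; simp
  rw [h, hset]

lemma myMul_vecMulVec {n : ℕ} (A : Matrix (Fin n) (Fin n) ℝ) (u v : Fin n → ℝ) :
    A * vecMulVec u v = vecMulVec (A *ᵥ u) v := by
  ext i j
  simp only [Matrix.mul_apply, vecMulVec_apply, Matrix.mulVec, dotProduct, Finset.sum_mul]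
  exact Finset.sum_congr rfl fun k _ => by ring

lemma myVecMulVec_mul {n : ℕ} (A : Matrix (Fin n) (Fin n) ℝ) (u v : Fin n → ℝ) :
    vecMulVec u v * A = vecMulVec u (v ᵥ* A) := by
  ext i j
  simp only [Matrix.mul_apply, vecMulVec_apply, Matrix.vecMul, dotProduct, Finset.mul_sum]
  exact Finset.sum_congr rfl fun k _ => by ring

lemma myVecMulVec_mulVec {n : ℕ} (u v w : Fin n → ℝ) :
    vecMulVec u v *ᵥ w = (v ⬝ᵥ w) • u := by
  ext i
  simp only [Matrix.mulVec, vecMulVec_apply, dotProduct, Pi.smul_apply, smul_eq_mul,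
    Finset.sum_mul, Finset.mul_sum]
  exact Finset.sum_congr rfl fun k _ => by ring

lemma myVecMulVec_smul {n : ℕ} (u v : Fin n → ℝ) (r : ℝ) :
    vecMulVec u (r • v) = r • vecMulVec u v := by
  ext i j
  simp [vecMulVec_apply, mul_comm, mul_left_comm]

lemma myDot_symm {n : ℕ} (A : Matrix (Fin n) (Fin n) ℝ) (hA : Aᵀ = A) (x z : Fin n → ℝ) :
    x ⬝ᵥ (A *ᵥ z) = z ⬝ᵥ (A *ᵥ x) := by
  rw [Matrix.dotProduct_mulVec]
  conv_lhs => rw [← hA]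
  rw [Matrix.vecMul_transpose, dotProduct_comm]

lemma myDet {n : ℕ} (Ψ : Matrix (Fin n) (Fin n) ℝ) (hΨ : Ψ.PosDef) (d : Fin n → ℝ) :
    (Ψ + vecMulVec d d).det = Ψ.det * (1 + d ⬝ᵥ (Ψ⁻¹ *ᵥ d)) := by
  have hU : IsUnit Ψ.det := hΨ.det_pos.ne'.isUnit
  rw [vecMulVec_eq (Fin 1), Matrix.det_add_replicateCol_mul_replicateRow hU d d]
  congr 1
  have h2 : ((1 + replicateRow (Fin 1) d * Ψ⁻¹ * replicateCol (Fin 1) d : Matrix (Fin 1) (Fin 1) ℝ))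
      default default = 1 + d ⬝ᵥ Ψ⁻¹ *ᵥ d := by
    simp only [Matrix.add_apply, Matrix.one_apply_eq, ← Matrix.replicateRow_vecMul,
      Matrix.replicateRow_mul_replicateCol_apply, Matrix.replicateRow_apply, Matrix.mulVec_replicateCol_eq_const,
      Function.const_apply]
    rw [← Matrix.dotProduct_mulVec]
  rw [← h2]
  have hi : (fun a b => decidableEq_of_subsingleton a b : DecidableEq (Fin 1))
      = instDecidableEqFin 1 := Subsingleton.elim _ _
  rw [hi]
  exact Matrix.det_unique _

lemma myVecMul_vecMulVec {n : ℕ} (w u v : Fin n → ℝ) :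
    w ᵥ* vecMulVec u v = (w ⬝ᵥ u) • v := by
  ext j
  simp only [Matrix.vecMul, vecMulVec_apply, dotProduct, Pi.smul_apply, smul_eq_mul,
    Finset.sum_mul]
  exact Finset.sum_congr rfl fun k _ => by ring

lemma myInv {n : ℕ} (Ψ : Matrix (Fin n) (Fin n) ℝ) (hΨ : Ψ.PosDef) (d : Fin n → ℝ)
    (hsymm : Ψ⁻¹ᵀ = Ψ⁻¹) (hs : (1 : ℝ) + d ⬝ᵥ (Ψ⁻¹ *ᵥ d) ≠ 0) :
    (Ψ + vecMulVec d d)⁻¹ =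
      Ψ⁻¹ - (1 + d ⬝ᵥ (Ψ⁻¹ *ᵥ d))⁻¹ • vecMulVec (Ψ⁻¹ *ᵥ d) (Ψ⁻¹ *ᵥ d) := by
  set u := Ψ⁻¹ *ᵥ d with hu
  set a := d ⬝ᵥ u with hadef
  set c := (1 + a)⁻¹ with hc
  have hΨΨ : Ψ * Ψ⁻¹ = 1 := Matrix.mul_nonsing_inv _ hΨ.det_pos.ne'.isUnit
  have hΨu : Ψ *ᵥ u = d := by rw [hu, Matrix.mulVec_mulVec, hΨΨ, Matrix.one_mulVec]
  have hdu : d ᵥ* Ψ⁻¹ = u := by rw [← hsymm, Matrix.vecMul_transpose]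
  apply Matrix.inv_eq_right_inv
  rw [Matrix.add_mul, Matrix.mul_sub, Matrix.mul_sub, Matrix.mul_smul, Matrix.mul_smul,
    hΨΨ, myMul_vecMulVec, hΨu, myVecMulVec_mul, myVecMulVec_mul, hdu,
    myVecMul_vecMulVec, ← hadef, myVecMulVec_smul, smul_smul]
  have key : (1 : Matrix (Fin n) (Fin n) ℝ) - c • vecMulVec d u +
      (vecMulVec d u - (c * a) • vecMulVec d u)
      = 1 + ((1 - c - c * a) • vecMulVec d u) := by module
  rw [key, hc]
  have hcoef : (1 : ℝ) - (1 + a)⁻¹ - (1 + a)⁻¹ * a = 0 := by field_simp; ring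
  rw [hcoef, zero_smul, add_zero]

/-- Lemma 2 (marginal density, multivariate, as an integral identity): for `Ψ` positive
definite, with `Σ = Ψ + d·dᵀ`, `η = dᵀΨ⁻¹(y−μ)/(1 + dᵀΨ⁻¹d)` and `ζ = (1 + dᵀΨ⁻¹d)^{-1/2}`,
`∫₀^∞ 2·φₙ(y; μ + t·d, Ψ)·φ(t; 0, 1) dt = 2·φₙ(y; μ, Σ)·Φ(η/ζ)`. -/
theorem mv_skewNormal_marginal_density {n : ℕ}
    (Ψ : Matrix (Fin n) (Fin n) ℝ) (hΨ : Ψ.PosDef)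
    (d μ y : Fin n → ℝ)
    (η ζ : ℝ)
    (hη : η = d ⬝ᵥ (Ψ⁻¹ *ᵥ (y - μ)) / (1 + d ⬝ᵥ (Ψ⁻¹ *ᵥ d)))
    (hζ : ζ = (1 + d ⬝ᵥ (Ψ⁻¹ *ᵥ d)) ^ (-(1 : ℝ) / 2)) :
    ∫ t in Set.Ioi (0 : ℝ), 2 * mvNormalPDF (μ + t • d) Ψ y * normalPDF 0 1 t =
      2 * mvNormalPDF μ (Ψ + vecMulVec d d) y * stdNormalCDF (η / ζ) := by
  have hsymm : Ψ⁻¹ᵀ = Ψ⁻¹ := by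
    have h := hΨ.isHermitian.inv
    ext i j
    have h2 := congrFun (congrFun h i) j
    simpa [Matrix.conjTranspose_apply] using h2
  set w : Fin n → ℝ := y - μ with hw
  set a : ℝ := d ⬝ᵥ (Ψ⁻¹ *ᵥ d) with hadef
  set b : ℝ := d ⬝ᵥ (Ψ⁻¹ *ᵥ w) with hbdef
  set cq : ℝ := w ⬝ᵥ (Ψ⁻¹ *ᵥ w) with hcdef
  have ha : 0 ≤ a := by
    have h := (hΨ.inv.posSemidef).dotProduct_mulVec_nonneg d
    simpa using h
  have hs : (0:ℝ) < 1 + a := by linarith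
  set s : ℝ := 1 + a with hsdef
  set σ : ℝ := Real.sqrt s with hσdef
  have hσpos : 0 < σ := Real.sqrt_pos.mpr hs
  have hσ2 : σ ^ 2 = s := Real.sq_sqrt hs.le
  set β : ℝ := b / s with hβdef
  have hrs : s ^ (-(1:ℝ)/2) = σ⁻¹ := by
    rw [hσdef, Real.sqrt_eq_rpow, show (-(1:ℝ)/2) = -(1/2 : ℝ) by norm_num,
      Real.rpow_neg hs.le]
  have hζ' : ζ = σ⁻¹ := by rw [hζ, hrs]
  have hηζ : η / ζ = σ * β := by
    rw [hη, hζ', hβdef]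
    field_simp
  have hdot : ∀ v : Fin n → ℝ, v ⬝ᵥ (Ψ⁻¹ *ᵥ d) = d ⬝ᵥ (Ψ⁻¹ *ᵥ v) :=
    fun v => myDot_symm _ hsymm v d
  -- quadratic form in t
  have hquad : ∀ t : ℝ, (y - (μ + t • d)) ⬝ᵥ (Ψ⁻¹ *ᵥ (y - (μ + t • d)))
      = cq - 2 * b * t + a * t ^ 2 := by
    intro t
    have hy : y - (μ + t • d) = w - t • d := by rw [hw]; abel
    rw [hy]
    simp only [Matrix.mulVec_sub, Matrix.mulVec_smul, sub_dotProduct, dotProduct_sub,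
      smul_dotProduct, dotProduct_smul, smul_eq_mul]
    rw [hdot w, ← hbdef, ← hcdef, ← hadef]
    ring
  -- pointwise form of the integrand
  have hpt : ∀ t : ℝ,
      2 * mvNormalPDF (μ + t • d) Ψ y * normalPDF 0 1 t
      = (2 * ((2 * π) ^ (-(n:ℝ)/2) * Ψ.det ^ (-(1:ℝ)/2)) * (2 * π * 1) ^ (-(1:ℝ)/2)
          * Real.exp (-(1/2) * (cq - b ^ 2 / s)))
        * Real.exp (-(σ * t - σ * β) ^ 2 / 2) := by
    intro t
    rw [mvNormalPDF, normalPDF, hquad t]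
    have hexp : Real.exp (-(1/2) * (cq - 2 * b * t + a * t ^ 2))
        * Real.exp (-(t - 0) ^ 2 / (2 * 1))
        = Real.exp (-(1/2) * (cq - b ^ 2 / s)) * Real.exp (-(σ * t - σ * β) ^ 2 / 2) := by
      rw [← Real.exp_add, ← Real.exp_add]
      congr 1
      have h1 : (σ * t - σ * β) ^ 2 = s * (t - β) ^ 2 := by rw [← hσ2]; ring
      rw [h1, hβdef, hsdef]
      have hs' : (1 : ℝ) + a ≠ 0 := by positivity
      field_simp
      ring
    linear_combination (2 * ((2 * π) ^ (-(n:ℝ)/2) * Ψ.det ^ (-(1:ℝ)/2))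
      * (2 * π * 1) ^ (-(1:ℝ)/2)) * hexp
  -- integral computation
  have hI1 : ∫ t in Set.Ioi (0:ℝ), 2 * mvNormalPDF (μ + t • d) Ψ y * normalPDF 0 1 t
      = (2 * ((2 * π) ^ (-(n:ℝ)/2) * Ψ.det ^ (-(1:ℝ)/2)) * (2 * π * 1) ^ (-(1:ℝ)/2)
          * Real.exp (-(1/2) * (cq - b ^ 2 / s)))
        * ∫ t in Set.Ioi (0:ℝ), Real.exp (-(σ * t - σ * β) ^ 2 / 2) := by
    rw [← MeasureTheory.integral_const_mul]
    exact setIntegral_congr_fun measurableSet_Ioi (fun t _ => hpt t)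
  have hI2 : ∫ t in Set.Ioi (0:ℝ), Real.exp (-(σ * t - σ * β) ^ 2 / 2)
      = σ⁻¹ * ∫ x in Set.Iic (σ * β), Real.exp (-x ^ 2 / 2) := by
    have h1 := integral_comp_mul_left_Ioi (fun x => Real.exp (-(x - σ * β) ^ 2 / 2)) 0 hσpos
    simp only [mul_zero, smul_eq_mul] at h1
    rw [h1]
    congr 1
    have h2 := myIntegral_Ioi_add_right (fun x => Real.exp (-x ^ 2 / 2)) 0 (-(σ * β))
    simp only [zero_add] at h2
    simp only [sub_eq_add_neg]
    rw [h2]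
    have h3 := integral_comp_neg_Ioi (-(σ * β)) (fun x => Real.exp (-x ^ 2 / 2))
    simp only [neg_neg, neg_sq] at h3
    exact h3
  have hCDF : stdNormalCDF (σ * β)
      = (2 * π) ^ (-(1:ℝ)/2) * ∫ x in Set.Iic (σ * β), Real.exp (-x ^ 2 / 2) := by
    rw [stdNormalCDF]
    simp only [stdNormalPDF]
    rw [MeasureTheory.integral_const_mul]
  -- quadratic form on the RHS
  have hq2 : w ⬝ᵥ ((Ψ⁻¹ - s⁻¹ • vecMulVec (Ψ⁻¹ *ᵥ d) (Ψ⁻¹ *ᵥ d)) *ᵥ w)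
      = cq - b ^ 2 / s := by
    have hub : (Ψ⁻¹ *ᵥ d) ⬝ᵥ w = b := by
      rw [dotProduct_comm, hdot w, ← hbdef]
    rw [Matrix.sub_mulVec, dotProduct_sub, Matrix.smul_mulVec, myVecMulVec_mulVec,
      hub, dotProduct_smul, dotProduct_smul, smul_eq_mul, smul_eq_mul, ← hcdef,
      hdot w, ← hbdef]
    have hs' : s ≠ 0 := hs.ne'
    field_simp
  -- assemble
  rw [hI1, hI2, hηζ, mvNormalPDF, myDet Ψ hΨ d, myInv Ψ hΨ d hsymm hs.ne', ← hadef,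
    ← hsdef, hq2, hCDF]
  have hsplit : (Ψ.det * s) ^ (-(1:ℝ)/2) = Ψ.det ^ (-(1:ℝ)/2) * s ^ (-(1:ℝ)/2) :=
    Real.mul_rpow hΨ.det_pos.le hs.le
  rw [hsplit, hrs, mul_one]
  ring
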